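/- Let A_1, A_2 > 0 and take (d_1,d_2) = (3,6), n = 9. On ℝ²×ℝ² define v(q) := e^{(3q_1 + 6q_2)/2}, J(p) := (1/8)(p_1+p_2)² − p_1²/3 − p_2²/6, S(q) := A_1 e^{−q_1} + A_2 e^{−q_2}, the Ricci-flat Hamiltonian H(q,p) := v(q)^{-1}J(p) − S(q)v(q), and F(q,p) := −(1/24)(p_1 − p_2)² e^{−q_1 − 5q_2} + A_1 e^{q_1 + q_2}. Then F is a generalized first integral of H: there exists a smooth function φ on ℝ²×ℝ² such that {F,H} = φ·H identically; in particular {F,H}(q,p) = 0 at every point (q,p) with H(q,p) = 0. -/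

import Mathlib

/-- Partial derivative in the `i`-th `q`-coordinate. -/
noncomputable def pderivQ (F : (Fin 2 → ℝ) → (Fin 2 → ℝ) → ℝ) (i : Fin 2)
    (q p : Fin 2 → ℝ) : ℝ :=
  deriv (fun t => F (Function.update q i t) p) (q i)

/-- Partial derivative in the `i`-th `p`-coordinate. -/
noncomputable def pderivP (F : (Fin 2 → ℝ) → (Fin 2 → ℝ) → ℝ) (i : Fin 2)
    (q p : Fin 2 → ℝ) : ℝ :=
  deriv (fun t => F q (Function.update p i t)) (p i)

/-- Canonical Poisson bracket on `ℝ² × ℝ²`. -/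
noncomputable def poisson (F G : (Fin 2 → ℝ) → (Fin 2 → ℝ) → ℝ) (q p : Fin 2 → ℝ) : ℝ :=
  ∑ i : Fin 2, (pderivQ F i q p * pderivP G i q p - pderivP F i q p * pderivQ G i q p)

/-- The Ricci-flat Hamiltonian for `(d₁,d₂) = (3,6)`, `n = 9`:
`v(q) = e^{(3q₁+6q₂)/2}`, `J(p) = (p₁+p₂)²/8 − p₁²/3 − p₂²/6`,
`S(q) = A₁e^{−q₁} + A₂e^{−q₂}`, `H = v⁻¹J − Sv`. -/
noncomputable def Ham (A1 A2 : ℝ) (q p : Fin 2 → ℝ) : ℝ :=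
  (Real.exp ((3 * q 0 + 6 * q 1) / 2))⁻¹ *
      ((1 / 8) * (p 0 + p 1) ^ 2 - (p 0) ^ 2 / 3 - (p 1) ^ 2 / 6) -
    (A1 * Real.exp (-(q 0)) + A2 * Real.exp (-(q 1))) * Real.exp ((3 * q 0 + 6 * q 1) / 2)

/-- The Dancer–Wang generalized first integral for `(d₁,d₂) = (3,6)`. -/
noncomputable def Fint (A1 : ℝ) (q p : Fin 2 → ℝ) : ℝ :=
  -(1 / 24) * (p 0 - p 1) ^ 2 * Real.exp (-(q 0) - 5 * q 1) +
    A1 * Real.exp (q 0 + q 1)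

lemma dFq0 (A1 : ℝ) (q p : Fin 2 → ℝ) :
    pderivQ (Fint A1) 0 q p =
      (1/24) * (p 0 - p 1)^2 * Real.exp (-(q 0) - 5 * q 1) + A1 * Real.exp (q 0 + q 1) := by
  unfold pderivQ
  have h : (fun t => Fint A1 (Function.update q 0 t) p)
      = fun t => -(1/24) * (p 0 - p 1)^2 * Real.exp (-t - 5 * q 1)
          + A1 * Real.exp (t + q 1) := by
    funext t; simp [Fint, Function.update]
  rw [h]
  have hd : HasDerivAt (fun t => -(1/24) * (p 0 - p 1)^2 * Real.exp (-t - 5 * q 1)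
      + A1 * Real.exp (t + q 1))
      ((1/24) * (p 0 - p 1)^2 * Real.exp (-(q 0) - 5 * q 1) + A1 * Real.exp (q 0 + q 1))
      (q 0) := by
    have H := (((hasDerivAt_id' (q 0)).neg.sub_const (5 * q 1)).exp.const_mul
      (-(1/24) * (p 0 - p 1)^2)).add
      (((hasDerivAt_id' (q 0)).add_const (q 1)).exp.const_mul A1)
    refine H.congr_deriv ?_
    simp only [Pi.neg_apply]; push_cast; ring
  exact hd.deriv

lemma dFq1 (A1 : ℝ) (q p : Fin 2 → ℝ) :
    pderivQ (Fint A1) 1 q p =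
      (5/24) * (p 0 - p 1)^2 * Real.exp (-(q 0) - 5 * q 1) + A1 * Real.exp (q 0 + q 1) := by
  unfold pderivQ
  have h : (fun t => Fint A1 (Function.update q 1 t) p)
      = fun t => -(1/24) * (p 0 - p 1)^2 * Real.exp (-(q 0) - 5 * t)
          + A1 * Real.exp (q 0 + t) := by
    funext t; simp [Fint, Function.update]
  rw [h]
  have hd : HasDerivAt (fun t => -(1/24) * (p 0 - p 1)^2 * Real.exp (-(q 0) - 5 * t)
      + A1 * Real.exp (q 0 + t))
      ((5/24) * (p 0 - p 1)^2 * Real.exp (-(q 0) - 5 * q 1) + A1 * Real.exp (q 0 + q 1))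
      (q 1) := by
    have H := ((((hasDerivAt_id' (q 1)).const_mul 5).const_sub (-(q 0))).exp.const_mul
      (-(1/24) * (p 0 - p 1)^2)).add
      (((hasDerivAt_id' (q 1)).const_add (q 0)).exp.const_mul A1)
    have he : (fun t : ℝ => -(q 0) - 5 * t) = fun t : ℝ => -(q 0) - 5 * t := rfl
    refine H.congr_deriv ?_
    push_cast; ring
  exact hd.deriv

lemma dFp0 (A1 : ℝ) (q p : Fin 2 → ℝ) :
    pderivP (Fint A1) 0 q p =
      -(1/12) * (p 0 - p 1) * Real.exp (-(q 0) - 5 * q 1) := by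
  unfold pderivP
  have h : (fun t => Fint A1 q (Function.update p 0 t))
      = fun t => -(1/24) * (t - p 1)^2 * Real.exp (-(q 0) - 5 * q 1)
          + A1 * Real.exp (q 0 + q 1) := by
    funext t; simp [Fint, Function.update]
  rw [h]
  have hd : HasDerivAt (fun t => -(1/24) * (t - p 1)^2 * Real.exp (-(q 0) - 5 * q 1)
      + A1 * Real.exp (q 0 + q 1))
      (-(1/12) * (p 0 - p 1) * Real.exp (-(q 0) - 5 * q 1)) (p 0) := by
    have H := ((((((hasDerivAt_id' (p 0)).sub_const (p 1)).pow 2).const_mul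
      (-(1/24))).mul_const (Real.exp (-(q 0) - 5 * q 1))).add_const (A1 * Real.exp (q 0 + q 1)))
    refine H.congr_deriv ?_
    push_cast; ring
  exact hd.deriv

lemma dFp1 (A1 : ℝ) (q p : Fin 2 → ℝ) :
    pderivP (Fint A1) 1 q p =
      (1/12) * (p 0 - p 1) * Real.exp (-(q 0) - 5 * q 1) := by
  unfold pderivP
  have h : (fun t => Fint A1 q (Function.update p 1 t))
      = fun t => -(1/24) * (p 0 - t)^2 * Real.exp (-(q 0) - 5 * q 1)
          + A1 * Real.exp (q 0 + q 1) := by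
    funext t; simp [Fint, Function.update]
  rw [h]
  have hd : HasDerivAt (fun t => -(1/24) * (p 0 - t)^2 * Real.exp (-(q 0) - 5 * q 1)
      + A1 * Real.exp (q 0 + q 1))
      ((1/12) * (p 0 - p 1) * Real.exp (-(q 0) - 5 * q 1)) (p 1) := by
    have H := ((((((hasDerivAt_id' (p 1)).const_sub (p 0)).pow 2).const_mul
      (-(1/24))).mul_const (Real.exp (-(q 0) - 5 * q 1))).add_const (A1 * Real.exp (q 0 + q 1)))
    refine H.congr_deriv ?_
    push_cast; ring
  exact hd.deriv

lemma dHp0 (A1 A2 : ℝ) (q p : Fin 2 → ℝ) :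
    pderivP (Ham A1 A2) 0 q p =
      Real.exp (-((3 * q 0 + 6 * q 1) / 2)) * ((1/4) * (p 0 + p 1) - (2/3) * p 0) := by
  unfold pderivP
  have h : (fun t => Ham A1 A2 q (Function.update p 0 t))
      = fun t => Real.exp (-((3 * q 0 + 6 * q 1) / 2)) *
          ((1 / 8) * (t + p 1) ^ 2 - t ^ 2 / 3 - (p 1) ^ 2 / 6)
          - (A1 * Real.exp (-(q 0)) + A2 * Real.exp (-(q 1))) *
            Real.exp ((3 * q 0 + 6 * q 1) / 2) := by
    funext t; simp [Ham, Function.update, ← Real.exp_neg]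
  rw [h]
  have hd : HasDerivAt (fun t => Real.exp (-((3 * q 0 + 6 * q 1) / 2)) *
      ((1 / 8) * (t + p 1) ^ 2 - t ^ 2 / 3 - (p 1) ^ 2 / 6)
      - (A1 * Real.exp (-(q 0)) + A2 * Real.exp (-(q 1))) *
        Real.exp ((3 * q 0 + 6 * q 1) / 2))
      (Real.exp (-((3 * q 0 + 6 * q 1) / 2)) * ((1/4) * (p 0 + p 1) - (2/3) * p 0)) (p 0) := by
    have H := (((((((hasDerivAt_id' (p 0)).add_const (p 1)).pow 2).const_mul (1/8)).sub
      ((((hasDerivAt_id' (p 0)).pow 2).div_const 3))).sub_const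
        ((p 1) ^ 2 / 6)).const_mul (Real.exp (-((3 * q 0 + 6 * q 1) / 2)))).sub_const
        ((A1 * Real.exp (-(q 0)) + A2 * Real.exp (-(q 1))) * Real.exp ((3 * q 0 + 6 * q 1) / 2))
    refine H.congr_deriv ?_
    push_cast; ring
  exact hd.deriv

lemma dHp1 (A1 A2 : ℝ) (q p : Fin 2 → ℝ) :
    pderivP (Ham A1 A2) 1 q p =
      Real.exp (-((3 * q 0 + 6 * q 1) / 2)) * ((1/4) * (p 0 + p 1) - (1/3) * p 1) := by
  unfold pderivP
  have h : (fun t => Ham A1 A2 q (Function.update p 1 t))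
      = fun t => Real.exp (-((3 * q 0 + 6 * q 1) / 2)) *
          ((1 / 8) * (p 0 + t) ^ 2 - (p 0) ^ 2 / 3 - t ^ 2 / 6)
          - (A1 * Real.exp (-(q 0)) + A2 * Real.exp (-(q 1))) *
            Real.exp ((3 * q 0 + 6 * q 1) / 2) := by
    funext t; simp [Ham, Function.update, ← Real.exp_neg]
  rw [h]
  have hd : HasDerivAt (fun t => Real.exp (-((3 * q 0 + 6 * q 1) / 2)) *
      ((1 / 8) * (p 0 + t) ^ 2 - (p 0) ^ 2 / 3 - t ^ 2 / 6)
      - (A1 * Real.exp (-(q 0)) + A2 * Real.exp (-(q 1))) *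
        Real.exp ((3 * q 0 + 6 * q 1) / 2))
      (Real.exp (-((3 * q 0 + 6 * q 1) / 2)) * ((1/4) * (p 0 + p 1) - (1/3) * p 1)) (p 1) := by
    have H1 := (((((hasDerivAt_id' (p 1)).const_add (p 0)).pow 2).const_mul (1/8)).sub_const
      ((p 0) ^ 2 / 3)).sub (((hasDerivAt_id' (p 1)).pow 2).div_const 6)
    have H := (H1.const_mul (Real.exp (-((3 * q 0 + 6 * q 1) / 2)))).sub_const
      ((A1 * Real.exp (-(q 0)) + A2 * Real.exp (-(q 1))) * Real.exp ((3 * q 0 + 6 * q 1) / 2))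
    refine H.congr_deriv ?_
    push_cast; ring
  exact hd.deriv

lemma dHq0 (A1 A2 : ℝ) (q p : Fin 2 → ℝ) :
    pderivQ (Ham A1 A2) 0 q p =
      -(3/2) * Real.exp (-((3 * q 0 + 6 * q 1) / 2)) *
          ((1 / 8) * (p 0 + p 1) ^ 2 - (p 0) ^ 2 / 3 - (p 1) ^ 2 / 6)
        + A1 * Real.exp (-(q 0)) * Real.exp ((3 * q 0 + 6 * q 1) / 2)
        - (3/2) * (A1 * Real.exp (-(q 0)) + A2 * Real.exp (-(q 1))) *
            Real.exp ((3 * q 0 + 6 * q 1) / 2) := by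
  unfold pderivQ
  have h : (fun t => Ham A1 A2 (Function.update q 0 t) p)
      = fun t => Real.exp (-((3 * t + 6 * q 1) / 2)) *
          ((1 / 8) * (p 0 + p 1) ^ 2 - (p 0) ^ 2 / 3 - (p 1) ^ 2 / 6)
          - (A1 * Real.exp (-t) + A2 * Real.exp (-(q 1))) *
            Real.exp ((3 * t + 6 * q 1) / 2) := by
    funext t; simp [Ham, Function.update, ← Real.exp_neg]
  rw [h]
  have h1 : HasDerivAt (fun t : ℝ => (3 * t + 6 * q 1) / 2) (3 * 1 / 2) (q 0) :=
    (((hasDerivAt_id' (q 0)).const_mul 3).add_const (6 * q 1)).div_const 2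
  have hd : HasDerivAt (fun t => Real.exp (-((3 * t + 6 * q 1) / 2)) *
      ((1 / 8) * (p 0 + p 1) ^ 2 - (p 0) ^ 2 / 3 - (p 1) ^ 2 / 6)
      - (A1 * Real.exp (-t) + A2 * Real.exp (-(q 1))) *
        Real.exp ((3 * t + 6 * q 1) / 2))
      (-(3/2) * Real.exp (-((3 * q 0 + 6 * q 1) / 2)) *
          ((1 / 8) * (p 0 + p 1) ^ 2 - (p 0) ^ 2 / 3 - (p 1) ^ 2 / 6)
        + A1 * Real.exp (-(q 0)) * Real.exp ((3 * q 0 + 6 * q 1) / 2)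
        - (3/2) * (A1 * Real.exp (-(q 0)) + A2 * Real.exp (-(q 1))) *
            Real.exp ((3 * q 0 + 6 * q 1) / 2)) (q 0) := by
    have H := (h1.neg.exp.mul_const
        ((1 / 8) * (p 0 + p 1) ^ 2 - (p 0) ^ 2 / 3 - (p 1) ^ 2 / 6)).sub
      ((((hasDerivAt_id' (q 0)).neg.exp.const_mul A1).add_const
        (A2 * Real.exp (-(q 1)))).mul h1.exp)
    refine H.congr_deriv ?_
    simp only [Pi.neg_apply]; push_cast; ring
  exact hd.deriv

lemma dHq1 (A1 A2 : ℝ) (q p : Fin 2 → ℝ) :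
    pderivQ (Ham A1 A2) 1 q p =
      -3 * Real.exp (-((3 * q 0 + 6 * q 1) / 2)) *
          ((1 / 8) * (p 0 + p 1) ^ 2 - (p 0) ^ 2 / 3 - (p 1) ^ 2 / 6)
        + A2 * Real.exp (-(q 1)) * Real.exp ((3 * q 0 + 6 * q 1) / 2)
        - 3 * (A1 * Real.exp (-(q 0)) + A2 * Real.exp (-(q 1))) *
            Real.exp ((3 * q 0 + 6 * q 1) / 2) := by
  unfold pderivQ
  have h : (fun t => Ham A1 A2 (Function.update q 1 t) p)
      = fun t => Real.exp (-((3 * q 0 + 6 * t) / 2)) *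
          ((1 / 8) * (p 0 + p 1) ^ 2 - (p 0) ^ 2 / 3 - (p 1) ^ 2 / 6)
          - (A1 * Real.exp (-(q 0)) + A2 * Real.exp (-t)) *
            Real.exp ((3 * q 0 + 6 * t) / 2) := by
    funext t; simp [Ham, Function.update, ← Real.exp_neg]
  rw [h]
  have h1 : HasDerivAt (fun t : ℝ => (3 * q 0 + 6 * t) / 2) (6 * 1 / 2) (q 1) :=
    (((hasDerivAt_id' (q 1)).const_mul 6).const_add (3 * q 0)).div_const 2
  have hd : HasDerivAt (fun t => Real.exp (-((3 * q 0 + 6 * t) / 2)) *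
      ((1 / 8) * (p 0 + p 1) ^ 2 - (p 0) ^ 2 / 3 - (p 1) ^ 2 / 6)
      - (A1 * Real.exp (-(q 0)) + A2 * Real.exp (-t)) *
        Real.exp ((3 * q 0 + 6 * t) / 2))
      (-3 * Real.exp (-((3 * q 0 + 6 * q 1) / 2)) *
          ((1 / 8) * (p 0 + p 1) ^ 2 - (p 0) ^ 2 / 3 - (p 1) ^ 2 / 6)
        + A2 * Real.exp (-(q 1)) * Real.exp ((3 * q 0 + 6 * q 1) / 2)
        - 3 * (A1 * Real.exp (-(q 0)) + A2 * Real.exp (-(q 1))) *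
            Real.exp ((3 * q 0 + 6 * q 1) / 2)) (q 1) := by
    have H := (h1.neg.exp.mul_const
        ((1 / 8) * (p 0 + p 1) ^ 2 - (p 0) ^ 2 / 3 - (p 1) ^ 2 / 6)).sub
      ((((hasDerivAt_id' (q 1)).neg.exp.const_mul A2).const_add
        (A1 * Real.exp (-(q 0)))).mul h1.exp)
    refine H.congr_deriv ?_
    simp only [Pi.neg_apply]; push_cast; ring
  exact hd.deriv

lemma bracket_eq (A1 A2 : ℝ) (q p : Fin 2 → ℝ) :
    poisson (Fint A1) (Ham A1 A2) q p =
      (-(p 0 - p 1) * Real.exp (-(q 0) - 5 * q 1) / 24) * Ham A1 A2 q p := by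
  have key : Real.exp (-(q 0) - 5 * q 1) * Real.exp ((3 * q 0 + 6 * q 1) / 2) *
      Real.exp (-(q 0)) =
      Real.exp (-((3 * q 0 + 6 * q 1) / 2)) * Real.exp (q 0 + q 1) := by
    rw [← Real.exp_add, ← Real.exp_add, ← Real.exp_add]
    congr 1; ring
  simp only [poisson, Fin.sum_univ_two, dFq0, dFq1, dFp0, dFp1, dHq0, dHq1, dHp0, dHp1,
    Ham, ← Real.exp_neg]
  linear_combination (A1 * (p 0 - p 1) / 6) * key

/-- `F` is a generalized first integral of `H`: `{F,H} = φ·H` for a smooth `φ`;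
in particular `{F,H}` vanishes on the zero set of `H`. -/
theorem three_six_generalized_first_integral
    (A1 A2 : ℝ) (hA1 : 0 < A1) (hA2 : 0 < A2) :
    (∃ φ : ((Fin 2 → ℝ) × (Fin 2 → ℝ)) → ℝ, ContDiff ℝ (⊤ : ℕ∞) φ ∧
      ∀ q p : Fin 2 → ℝ,
        poisson (Fint A1) (Ham A1 A2) q p = φ (q, p) * Ham A1 A2 q p) ∧
    (∀ q p : Fin 2 → ℝ, Ham A1 A2 q p = 0 → poisson (Fint A1) (Ham A1 A2) q p = 0) := by
  refine ⟨⟨fun x => -(x.2 0 - x.2 1) * Real.exp (-(x.1 0) - 5 * x.1 1) / 24, ?_, ?_⟩, ?_⟩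
  · have e10 : ContDiff ℝ (⊤ : ℕ∞) fun x : (Fin 2 → ℝ) × (Fin 2 → ℝ) => x.1 0 :=
      contDiff_pi.mp contDiff_fst 0
    have e11 : ContDiff ℝ (⊤ : ℕ∞) fun x : (Fin 2 → ℝ) × (Fin 2 → ℝ) => x.1 1 :=
      contDiff_pi.mp contDiff_fst 1
    have e20 : ContDiff ℝ (⊤ : ℕ∞) fun x : (Fin 2 → ℝ) × (Fin 2 → ℝ) => x.2 0 :=
      contDiff_pi.mp contDiff_snd 0
    have e21 : ContDiff ℝ (⊤ : ℕ∞) fun x : (Fin 2 → ℝ) × (Fin 2 → ℝ) => x.2 1 :=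
      contDiff_pi.mp contDiff_snd 1
    exact (((e20.sub e21).neg.mul
      (Real.contDiff_exp.comp (e10.neg.sub (contDiff_const.mul e11)))).div_const 24)
  · intro q p
    exact bracket_eq A1 A2 q p
  · intro q p h0
    rw [bracket_eq, h0, mul_zero]
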